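/- Let 0 ≤ α < 1 and β, γ ≥ 0 with β + γ > 0. If f is analytic on the open unit disk D with f(0) = 0, f'(0) = 1, and |f'(z) − 1|^β · |z f''(z)|^γ < (1−α)^{β+γ} / 2^{β+2γ} for all z ∈ D, then Re f'(z) > (1+α)/2 for all z ∈ D. -/

import Mathlib

open Complex Metric Set Filter Topology

theorem stmt_7 (α β γ : ℝ) (hα0 : 0 ≤ α) (hα1 : α < 1) (hβ : 0 ≤ β) (hγ : 0 ≤ γ)
    (hβγ : 0 < β + γ)
    (f : ℂ → ℂ) (hf : DifferentiableOn ℂ f (ball 0 1))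
    (hf0 : f 0 = 0) (hf'0 : deriv f 0 = 1)
    (hineq : ∀ z ∈ ball (0:ℂ) 1,
      ‖deriv f z - 1‖ ^ β * ‖z * deriv (deriv f) z‖ ^ γ <
        (1 - α) ^ (β + γ) / 2 ^ (β + 2 * γ)) :
    ∀ z ∈ ball (0:ℂ) 1, (1 + α) / 2 < (deriv f z).re := by
  set g : ℂ → ℂ := fun z => deriv f z - 1 with hgdef
  set r : ℝ := (1 - α) / 2 with hrdef
  have hr0 : 0 < r := by rw [hrdef]; linarith
  have hfa : AnalyticOnNhd ℂ f (ball 0 1) := hf.analyticOnNhd isOpen_ball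
  have hdfd : DifferentiableOn ℂ (deriv f) (ball 0 1) := hfa.deriv.differentiableOn
  have hgd : DifferentiableOn ℂ g (ball 0 1) := hdfd.sub_const 1
  have hg0 : g 0 = 0 := by simp [hgdef, hf'0]
  -- main claim: ‖g z‖ < r on the ball
  have key : ∀ z ∈ ball (0:ℂ) 1, ‖g z‖ < r := by
    by_contra hcon
    push_neg at hcon
    obtain ⟨w, hw, hwr⟩ := hcon
    have hw1 : ‖w‖ < 1 := by simpa [mem_ball, dist_eq_norm] using hw
    set K : Set ℂ := closedBall 0 ‖w‖ ∩ g ⁻¹' {x : ℂ | r ≤ ‖x‖} with hKdef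
    have hKsub : K ⊆ ball (0:ℂ) 1 := by
      intro z hz
      have h1 : ‖z‖ ≤ ‖w‖ := by simpa [dist_eq_norm] using hz.1
      simp only [mem_ball, dist_eq_norm, sub_zero]
      exact lt_of_le_of_lt h1 hw1
    have hcb : closedBall (0:ℂ) ‖w‖ ⊆ ball (0:ℂ) 1 := by
      intro z hz
      have h1 : ‖z‖ ≤ ‖w‖ := by simpa [dist_eq_norm] using hz
      simp only [mem_ball, dist_eq_norm, sub_zero]
      exact lt_of_le_of_lt h1 hw1
    have hKclosed : IsClosed K :=
      ContinuousOn.preimage_isClosed_of_isClosed (hgd.continuousOn.mono hcb)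
        Metric.isClosed_closedBall (isClosed_le continuous_const continuous_norm)
    have hKcompact : IsCompact K :=
      (isCompact_closedBall (0:ℂ) ‖w‖).of_isClosed_subset hKclosed inter_subset_left
    have hKne : K.Nonempty := ⟨w, by
      refine ⟨?_, hwr⟩
      simp [mem_closedBall, dist_eq_norm]⟩
    obtain ⟨z₀, hz₀K, hmin⟩ := hKcompact.exists_isMinOn hKne (continuous_norm.continuousOn)
    have hz₀ball : z₀ ∈ ball (0:ℂ) 1 := hKsub hz₀K
    have hz₀r : r ≤ ‖g z₀‖ := hz₀K.2
    set ρ : ℝ := ‖z₀‖ with hρdef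
    have hρw : ρ ≤ ‖w‖ := by simpa [dist_eq_norm] using hz₀K.1
    have hρ0 : 0 < ρ := by
      rcases eq_or_lt_of_le (norm_nonneg z₀) with h | h
      · exfalso
        have : z₀ = 0 := by simpa using h.symm
        rw [this, hg0] at hz₀r
        simp at hz₀r
        linarith
      · exact h
    -- g maps ball 0 ρ into ball (g 0) r
    have hmaps : MapsTo g (ball (0:ℂ) ρ) (ball (g 0) r) := by
      intro z hz
      have hzρ : ‖z‖ < ρ := by simpa [dist_eq_norm] using hz
      have hz1 : z ∈ ball (0:ℂ) 1 := by
        simp only [mem_ball, dist_eq_norm, sub_zero]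
        exact lt_of_lt_of_le (lt_of_lt_of_le hzρ hρw) hw1.le
      by_contra hnot
      have hge : r ≤ ‖g z‖ := by
        simp only [mem_ball, hg0, dist_zero_right] at hnot
        linarith [not_lt.mp hnot]
      have hzK : z ∈ K := ⟨by
        simp only [mem_closedBall, dist_eq_norm, sub_zero]
        exact le_trans hzρ.le hρw, hge⟩
      exact absurd (hmin hzK) (not_le.mpr hzρ)
    have hgdρ : DifferentiableOn ℂ g (ball (0:ℂ) ρ) :=
      hgd.mono (ball_subset_ball (by linarith [lt_of_le_of_lt hρw hw1]))
    -- Schwarz: ‖g (t z₀)‖ ≤ r * t for t ∈ (0,1)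
    have hschwarz : ∀ t : ℝ, t ∈ Ioo (0:ℝ) 1 → ‖g ((t:ℂ) * z₀)‖ ≤ r * t := by
      intro t ht
      have htz : (t:ℂ) * z₀ ∈ ball (0:ℂ) ρ := by
        simp only [mem_ball, dist_eq_norm, sub_zero, norm_mul, Complex.norm_real,
          Real.norm_eq_abs, abs_of_pos ht.1]
        nlinarith [ht.1, ht.2, hρ0]
      have := Complex.dist_le_div_mul_dist_of_mapsTo_ball hgdρ (hmaps.mono_right ball_subset_closedBall) htz
      rw [hg0, dist_zero_right, dist_zero_right] at this
      calc ‖g ((t:ℂ) * z₀)‖ ≤ r / ρ * ‖(t:ℂ) * z₀‖ := this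
        _ = r / ρ * (t * ρ) := by
            rw [norm_mul, Complex.norm_real, Real.norm_eq_abs, abs_of_pos ht.1]
        _ = r * t := by field_simp
    -- derivative of t ↦ g (t z₀) at 1
    have hgz₀diff : DifferentiableAt ℂ g z₀ :=
      hgd.differentiableAt (isOpen_ball.mem_nhds hz₀ball)
    have hc : HasDerivAt (fun s : ℂ => g (s * z₀)) (deriv g z₀ * z₀) 1 := by
      have h1 : HasDerivAt (fun s : ℂ => s * z₀) z₀ 1 := by
        simpa using (hasDerivAt_id (1:ℂ)).mul_const z₀
      have h2 : HasDerivAt g (deriv g z₀) ((1:ℂ) * z₀) := by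
        rw [one_mul]; exact hgz₀diff.hasDerivAt
      exact h2.comp 1 h1
    have hslope : Tendsto (slope (fun s : ℂ => g (s * z₀)) 1) (𝓝[≠] (1:ℂ))
        (𝓝 (deriv g z₀ * z₀)) := hasDerivAt_iff_tendsto_slope.mp hc
    have hmapfilter : Tendsto (fun t : ℝ => (t:ℂ)) (𝓝[<] (1:ℝ)) (𝓝[≠] (1:ℂ)) := by
      apply tendsto_nhdsWithin_of_tendsto_nhds_of_eventually_within
      · exact (Complex.continuous_ofReal.tendsto 1).mono_left nhdsWithin_le_nhds
      · filter_upwards [self_mem_nhdsWithin] with t ht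
        simp only [mem_Iio] at ht
        simp only [mem_compl_iff, mem_singleton_iff]
        intro h
        rw [show (1:ℂ) = ((1:ℝ):ℂ) by norm_num] at h
        exact absurd (Complex.ofReal_inj.mp h) (ne_of_lt ht)
    have htend : Tendsto (fun t : ℝ => ‖slope (fun s : ℂ => g (s * z₀)) 1 (t:ℂ)‖)
        (𝓝[<] (1:ℝ)) (𝓝 ‖deriv g z₀ * z₀‖) :=
      Tendsto.comp (continuous_norm.tendsto (deriv g z₀ * z₀)) (Tendsto.comp hslope hmapfilter)
    have hlow : ∀ᶠ t : ℝ in 𝓝[<] (1:ℝ), r ≤ ‖slope (fun s : ℂ => g (s * z₀)) 1 (t:ℂ)‖ := by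
      filter_upwards [Ioo_mem_nhdsLT_of_mem (show (1:ℝ) ∈ Ioc (0:ℝ) 1 by norm_num)]
        with t ht
      have ht1 : (0:ℝ) < 1 - t := by linarith [ht.2]
      rw [slope_def_field]
      have hnum : r * (1 - t) ≤ ‖g ((t:ℂ) * z₀) - g ((1:ℂ) * z₀)‖ := by
        have h1 : ‖g ((1:ℂ) * z₀)‖ - ‖g ((t:ℂ) * z₀)‖ ≤ ‖g ((t:ℂ) * z₀) - g ((1:ℂ) * z₀)‖ := by
          calc ‖g ((1:ℂ) * z₀)‖ - ‖g ((t:ℂ) * z₀)‖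
              ≤ ‖g ((1:ℂ) * z₀) - g ((t:ℂ) * z₀)‖ := norm_sub_norm_le _ _
            _ = ‖g ((t:ℂ) * z₀) - g ((1:ℂ) * z₀)‖ := norm_sub_rev _ _
        have h2 : r ≤ ‖g ((1:ℂ) * z₀)‖ := by rw [one_mul]; exact hz₀r
        have h3 := hschwarz t ht
        nlinarith
      have hden : ‖(t:ℂ) - 1‖ = 1 - t := by
        rw [show ((t:ℂ) - 1) = ((t - 1 : ℝ) : ℂ) by push_cast; ring]
        rw [Complex.norm_real, Real.norm_eq_abs, abs_of_neg (by linarith)]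
        ring
      rw [norm_div, hden, le_div_iff₀ ht1]
      exact hnum
    have hlb : r ≤ ‖deriv g z₀ * z₀‖ := ge_of_tendsto htend hlow
    -- contradiction with hineq
    have hIneq := hineq z₀ hz₀ball
    have hderiv_eq : deriv (deriv f) z₀ = deriv g z₀ := by
      rw [hgdef]
      exact (deriv_sub_const 1).symm
    have habs1 : ‖deriv f z₀ - 1‖ = ‖g z₀‖ := by
      rw [hgdef]
    have habs2 : ‖z₀ * deriv (deriv f) z₀‖ = ‖deriv g z₀ * z₀‖ := by
      rw [hderiv_eq, mul_comm]
    rw [habs1, habs2] at hIneq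
    have hlhs : r ^ β * r ^ γ ≤ ‖g z₀‖ ^ β * ‖deriv g z₀ * z₀‖ ^ γ := by
      apply mul_le_mul (Real.rpow_le_rpow hr0.le hz₀r hβ)
        (Real.rpow_le_rpow hr0.le hlb hγ) (Real.rpow_nonneg hr0.le γ)
        (Real.rpow_nonneg (norm_nonneg _) β)
    have hrhs : (1 - α) ^ (β + γ) / 2 ^ (β + 2 * γ) ≤ r ^ β * r ^ γ := by
      have e1 : r ^ β * r ^ γ = r ^ (β + γ) := (Real.rpow_add hr0 β γ).symm
      have e2 : r ^ (β + γ) = (1 - α) ^ (β + γ) / 2 ^ (β + γ) := by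
        rw [hrdef, Real.div_rpow (by linarith) (by norm_num)]
      rw [e1, e2]
      apply div_le_div_of_nonneg_left (Real.rpow_nonneg (by linarith) _)
        (Real.rpow_pos_of_pos (by norm_num) _)
      exact Real.rpow_le_rpow_left_iff (by norm_num : (1:ℝ) < 2) |>.mpr (by linarith)
    linarith
  intro z hz
  have h1 := key z hz
  have h2 : |(g z).re| ≤ ‖g z‖ := Complex.abs_re_le_norm (g z)
  have h3 : (g z).re = (deriv f z).re - 1 := by simp [hgdef]
  have h4 : -r < (g z).re := by
    have := abs_lt.mp (lt_of_le_of_lt h2 h1)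
    exact this.1
  rw [h3] at h4
  rw [hrdef] at h4
  linarith
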